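/- Let 0 < q < 1, let m_d > 0 and phi > 0, and let S and S_hat be d x d real matrices satisfying max_{1<=i<=d} Sum_{m=1}^{d} |S_{im}|^q <= m_d and max_{i,m} |S_hat_{im} - S_{im}| <= phi. Define the hard-thresholded matrix S_hat^T by S_hat^T_{im} = S_hat_{im} if |S_hat_{im}| >= 2*phi and S_hat^T_{im} = 0 otherwise. Then the maximum row l1 error satisfies max_{1<=i<=d} Sum_{m=1}^{d} |S_hat^T_{im} - S_{im}| <= (1 + 3^{1-q}) * m_d * phi^{1-q}. In particular, if S and S_hat are symmetric, the spectral norm of S_hat^T - S is bounded by (1 + 3^{1-q}) * m_d * phi^{1-q}. -/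
import Mathlib


open Matrix

/-- Entrywise bound for the hard-thresholding error. -/
lemma hard_threshold_entry_bound
    (q φ s shat : ℝ) (hq0 : 0 < q) (hq1 : q < 1) (hφ : 0 < φ)
    (herr : |shat - s| ≤ φ) :
    |(if 2 * φ ≤ |shat| then shat else 0) - s|
      ≤ (1 + 3 ^ (1 - q)) * φ ^ (1 - q) * |s| ^ q := by
  have h1q : 0 < 1 - q := by linarith
  split_ifs with h
  · -- kept: error ≤ φ, and |s| ≥ φ so φ ≤ φ^{1-q} |s|^q
    have hs : φ ≤ |s| := by
      have := abs_sub_abs_le_abs_sub shat s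
      linarith
    have hφq : φ ^ q ≤ |s| ^ q :=
      Real.rpow_le_rpow (le_of_lt hφ) hs (le_of_lt hq0)
    have hφeq : φ ^ (1 - q) * φ ^ q = φ := by
      rw [← Real.rpow_add hφ]; norm_num
    calc |shat - s| ≤ φ := herr
      _ = φ ^ (1 - q) * φ ^ q := hφeq.symm
      _ ≤ φ ^ (1 - q) * |s| ^ q := by
          exact mul_le_mul_of_nonneg_left hφq (Real.rpow_nonneg hφ.le _)
      _ ≤ (1 + 3 ^ (1 - q)) * φ ^ (1 - q) * |s| ^ q := by
          have h3 : (0:ℝ) ≤ (3:ℝ) ^ (1 - q) := Real.rpow_nonneg (by norm_num) _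
          nlinarith [Real.rpow_nonneg hφ.le (1-q), Real.rpow_nonneg (abs_nonneg s) q,
            mul_nonneg (Real.rpow_nonneg hφ.le (1-q)) (Real.rpow_nonneg (abs_nonneg s) q)]
  · -- dropped: |s| ≤ 3φ
    have hs3 : |s| ≤ 3 * φ := by
      have h2 : |shat| < 2 * φ := lt_of_not_ge h
      have := abs_sub_abs_le_abs_sub s shat
      rw [abs_sub_comm s shat] at this
      linarith
    rw [zero_sub, abs_neg]
    rcases eq_or_lt_of_le (abs_nonneg s) with h0 | h0
    · rw [← h0]
      have : |s| ^ q = 0 := by rw [← h0]; exact Real.zero_rpow (ne_of_gt hq0)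
      positivity
    · have hsplit : |s| = |s| ^ (1 - q) * |s| ^ q := by
        rw [← Real.rpow_add h0]; norm_num
      have h1 : |s| ^ (1 - q) ≤ (3 * φ) ^ (1 - q) :=
        Real.rpow_le_rpow (abs_nonneg s) hs3 h1q.le
      have h2 : (3 * φ) ^ (1 - q) = 3 ^ (1 - q) * φ ^ (1 - q) :=
        Real.mul_rpow (by norm_num) hφ.le
      calc |s| = |s| ^ (1 - q) * |s| ^ q := hsplit
        _ ≤ 3 ^ (1 - q) * φ ^ (1 - q) * |s| ^ q := by
            rw [← h2]
            exact mul_le_mul_of_nonneg_right h1 (Real.rpow_nonneg (abs_nonneg s) _)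
        _ ≤ (1 + 3 ^ (1 - q)) * φ ^ (1 - q) * |s| ^ q := by
            nlinarith [mul_nonneg (Real.rpow_nonneg hφ.le (1-q))
              (Real.rpow_nonneg (abs_nonneg s) q)]

/-- Deterministic hard-thresholding bound for approximately sparse matrices: if each row of
`S` has `l^q`-norm at most `m_d` and the entrywise error of `Ŝ` is at most `φ`, then the
matrix obtained by keeping only entries of `Ŝ` of magnitude at least `2φ` has maximum row
`l¹` error at most `(1 + 3^{1-q}) m_d φ^{1-q}`; for symmetric `S, Ŝ` the spectral (l²
operator) norm of the error obeys the same bound. -/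
theorem hard_thresholding_sparse_bound
    (d : ℕ) (q md φ : ℝ) (hq0 : 0 < q) (hq1 : q < 1) (hmd : 0 < md) (hφ : 0 < φ)
    (S Shat : Matrix (Fin d) (Fin d) ℝ)
    (hsparse : ∀ i, ∑ m, |S i m| ^ q ≤ md)
    (herr : ∀ i m, |Shat i m - S i m| ≤ φ) :
    (∀ i, ∑ m,
        |(Matrix.of fun i m : Fin d =>
            if 2 * φ ≤ |Shat i m| then Shat i m else 0) i m - S i m|
      ≤ (1 + 3 ^ (1 - q)) * md * φ ^ (1 - q))
    ∧ (Sᵀ = S → Shatᵀ = Shat →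
      ‖Matrix.toEuclideanCLM (𝕜 := ℝ)
          ((Matrix.of fun i m : Fin d =>
            if 2 * φ ≤ |Shat i m| then Shat i m else 0) - S)‖
        ≤ (1 + 3 ^ (1 - q)) * md * φ ^ (1 - q)) := by
  set T : Matrix (Fin d) (Fin d) ℝ :=
    Matrix.of fun i m : Fin d => if 2 * φ ≤ |Shat i m| then Shat i m else 0 with hT
  set R : ℝ := (1 + 3 ^ (1 - q)) * md * φ ^ (1 - q) with hR
  have hRnn : 0 ≤ R := by
    have h3 : (0:ℝ) ≤ (3:ℝ) ^ (1 - q) := Real.rpow_nonneg (by norm_num) _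
    have := Real.rpow_nonneg hφ.le (1 - q)
    positivity
  have hrow : ∀ i, ∑ m, |T i m - S i m| ≤ R := by
    intro i
    calc ∑ m, |T i m - S i m|
        ≤ ∑ m, (1 + 3 ^ (1 - q)) * φ ^ (1 - q) * |S i m| ^ q := by
          apply Finset.sum_le_sum
          intro m _
          exact hard_threshold_entry_bound q φ (S i m) (Shat i m) hq0 hq1 hφ (herr i m)
      _ = (1 + 3 ^ (1 - q)) * φ ^ (1 - q) * ∑ m, |S i m| ^ q := by
          rw [Finset.mul_sum]
      _ ≤ (1 + 3 ^ (1 - q)) * φ ^ (1 - q) * md := by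
          apply mul_le_mul_of_nonneg_left (hsparse i)
          have h3 : (0:ℝ) ≤ (3:ℝ) ^ (1 - q) := Real.rpow_nonneg (by norm_num) _
          have := Real.rpow_nonneg hφ.le (1 - q)
          positivity
      _ = R := by ring
  refine ⟨hrow, fun hSsym hShatsym => ?_⟩
  -- the error matrix is symmetric
  set A : Matrix (Fin d) (Fin d) ℝ := T - S with hA
  have hAsym : ∀ i m, A m i = A i m := by
    intro i m
    have h1 : S m i = S i m := by
      rw [show S m i = Sᵀ i m from rfl, hSsym]
    have h2 : Shat m i = Shat i m := by
      rw [show Shat m i = Shatᵀ i m from rfl, hShatsym]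
    simp only [hA, Matrix.sub_apply, hT, Matrix.of_apply, h1, h2]
  have hrowA : ∀ i, ∑ m, |A i m| ≤ R := hrow
  have hcolA : ∀ m, ∑ i, |A i m| ≤ R := by
    intro m
    calc ∑ i, |A i m| = ∑ i, |A m i| := by
          apply Finset.sum_congr rfl; intro i _; rw [hAsym m i]
      _ ≤ R := hrowA m
  -- Schur test: ‖A x‖ ≤ R ‖x‖
  apply ContinuousLinearMap.opNorm_le_bound _ hRnn
  intro x
  have hAx : ∀ i, (Matrix.toEuclideanCLM (𝕜 := ℝ) A x) i = ∑ m, A i m * x m := by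
    intro i
    have := Matrix.ofLp_toEuclideanCLM (𝕜 := ℝ) A x
    have h2 := congrFun this i
    simpa [Matrix.mulVec, dotProduct] using h2
  rw [EuclideanSpace.norm_eq, EuclideanSpace.norm_eq]
  have key : ∑ i, ‖(Matrix.toEuclideanCLM (𝕜 := ℝ) A x) i‖ ^ 2
      ≤ R ^ 2 * ∑ m, ‖x m‖ ^ 2 := by
    calc ∑ i, ‖(Matrix.toEuclideanCLM (𝕜 := ℝ) A x) i‖ ^ 2
        ≤ ∑ i, (∑ m, |A i m| * |x m|) ^ 2 := by
          apply Finset.sum_le_sum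
          intro i _
          rw [hAx i, Real.norm_eq_abs, sq_abs]
          have h1 : |∑ m, A i m * x m| ≤ ∑ m, |A i m| * |x m| := by
            calc |∑ m, A i m * x m| ≤ ∑ m, |A i m * x m| :=
                  Finset.abs_sum_le_sum_abs _ _
              _ = ∑ m, |A i m| * |x m| := by
                  apply Finset.sum_congr rfl; intro m _; exact abs_mul _ _
          calc (∑ m, A i m * x m) ^ 2 = |∑ m, A i m * x m| ^ 2 := (sq_abs _).symm
            _ ≤ (∑ m, |A i m| * |x m|) ^ 2 := by
                apply sq_le_sq' _ h1
                have : (0:ℝ) ≤ ∑ m, |A i m| * |x m| :=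
                  Finset.sum_nonneg fun m _ => mul_nonneg (abs_nonneg _) (abs_nonneg _)
                linarith [abs_nonneg (∑ m, A i m * x m)]
      _ ≤ ∑ i, (∑ m, |A i m|) * (∑ m, |A i m| * x m ^ 2) := by
          apply Finset.sum_le_sum
          intro i _
          apply Finset.sum_sq_le_sum_mul_sum_of_sq_eq_mul
          · intro m _; exact abs_nonneg _
          · intro m _; exact mul_nonneg (abs_nonneg _) (sq_nonneg _)
          · intro m _
            rw [mul_pow, sq_abs (x m), sq]
            ring
      _ ≤ ∑ i, R * (∑ m, |A i m| * x m ^ 2) := by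
          apply Finset.sum_le_sum
          intro i _
          apply mul_le_mul_of_nonneg_right (hrowA i)
          exact Finset.sum_nonneg fun m _ => mul_nonneg (abs_nonneg _) (sq_nonneg _)
      _ = R * ∑ m, (∑ i, |A i m|) * x m ^ 2 := by
          rw [← Finset.mul_sum, Finset.sum_comm]
          congr 1
          apply Finset.sum_congr rfl
          intro m _
          rw [Finset.sum_mul]
      _ ≤ R * ∑ m, R * x m ^ 2 := by
          apply mul_le_mul_of_nonneg_left _ hRnn
          apply Finset.sum_le_sum
          intro m _
          exact mul_le_mul_of_nonneg_right (hcolA m) (sq_nonneg _)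
      _ = R ^ 2 * ∑ m, ‖x m‖ ^ 2 := by
          rw [← Finset.mul_sum]
          simp only [Real.norm_eq_abs, sq_abs]
          ring
  calc Real.sqrt (∑ i, ‖(Matrix.toEuclideanCLM (𝕜 := ℝ) A x) i‖ ^ 2)
      ≤ Real.sqrt (R ^ 2 * ∑ m, ‖x m‖ ^ 2) := Real.sqrt_le_sqrt key
    _ = R * Real.sqrt (∑ m, ‖x m‖ ^ 2) := by
        rw [Real.sqrt_mul (sq_nonneg R), Real.sqrt_sq hRnn]
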